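/- For every L > 0, G > 0 and every I ∈ ℝ, the real 4×4 matrix M with rows: (1/L³, −3/L⁴, 0, 0); (−1/(G⁴L³), 3/(G⁴L⁴), 4/(G⁵L³), 0); (−√(5/3)/(2G⁴L³), √15/(2G⁴L⁴), 2√(5/3)/(G⁵L³), 0); (2I/(3G⁵L³), −2I/(G⁵L⁴), −10I/(3G⁶L³), 2/(3G⁵L³)) has rank exactly 3. -/

import Mathlib

open Real Matrix

private lemma sqrt15_eq : Real.sqrt 15 = 3 * Real.sqrt (5 / 3) := by
  rw [show (15 : ℝ) = 3 ^ 2 * (5 / 3) by norm_num, Real.sqrt_mul (by positivity),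
    Real.sqrt_sq (by norm_num)]

/-- The frequency matrix `M_Ω(L,G,I)` around the relative equilibria
`E₁,₂ = (0,0,±G)` of the twice-reduced system has rank exactly 3 (Han–Li–Yi
nondegeneracy). -/
theorem frequency_matrix_twice_reduced_E12_rank (L G I : ℝ) (hL : 0 < L) (hG : 0 < G) :
    (!![1 / L ^ 3, -3 / L ^ 4, 0, 0;
        -1 / (G ^ 4 * L ^ 3), 3 / (G ^ 4 * L ^ 4), 4 / (G ^ 5 * L ^ 3), 0;
        -(Real.sqrt (5 / 3)) / (2 * G ^ 4 * L ^ 3), Real.sqrt 15 / (2 * G ^ 4 * L ^ 4),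
          2 * Real.sqrt (5 / 3) / (G ^ 5 * L ^ 3), 0;
        2 * I / (3 * G ^ 5 * L ^ 3), -2 * I / (G ^ 5 * L ^ 4),
          -10 * I / (3 * G ^ 6 * L ^ 3), 2 / (3 * G ^ 5 * L ^ 3)] :
      Matrix (Fin 4) (Fin 4) ℝ).rank = 3 := by
  have hL0 : L ≠ 0 := hL.ne'
  have hG0 : G ≠ 0 := hG.ne'
  set M : Matrix (Fin 4) (Fin 4) ℝ :=
    !![1 / L ^ 3, -3 / L ^ 4, 0, 0;
        -1 / (G ^ 4 * L ^ 3), 3 / (G ^ 4 * L ^ 4), 4 / (G ^ 5 * L ^ 3), 0;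
        -(Real.sqrt (5 / 3)) / (2 * G ^ 4 * L ^ 3), Real.sqrt 15 / (2 * G ^ 4 * L ^ 4),
          2 * Real.sqrt (5 / 3) / (G ^ 5 * L ^ 3), 0;
        2 * I / (3 * G ^ 5 * L ^ 3), -2 * I / (G ^ 5 * L ^ 4),
          -10 * I / (3 * G ^ 6 * L ^ 3), 2 / (3 * G ^ 5 * L ^ 3)] with hM
  set v : Fin 3 → (Fin 4 → ℝ) := ![M 0, M 1, M 3] with hv
  -- the third row is a multiple of the second
  have hrow : M 2 = (Real.sqrt (5 / 3) / 2) • M 1 := by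
    funext j
    fin_cases j <;>
      simp [hM, Pi.smul_apply, smul_eq_mul, sqrt15_eq] <;>
      field_simp <;> ring
  -- span of rows of M equals span of the three rows v
  have hspan : Submodule.span ℝ (Set.range M) = Submodule.span ℝ (Set.range v) := by
    apply le_antisymm
    · rw [Submodule.span_le]
      rintro x ⟨i, rfl⟩
      fin_cases i
      · exact Submodule.subset_span ⟨0, rfl⟩
      · exact Submodule.subset_span ⟨1, rfl⟩
      · have : M 2 ∈ Submodule.span ℝ (Set.range v) := by
          rw [hrow]
          exact Submodule.smul_mem _ _ (Submodule.subset_span ⟨1, rfl⟩)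
        exact this
      · exact Submodule.subset_span ⟨2, rfl⟩
    · rw [Submodule.span_le]
      rintro x ⟨i, rfl⟩
      fin_cases i
      · exact Submodule.subset_span ⟨0, rfl⟩
      · exact Submodule.subset_span ⟨1, rfl⟩
      · exact Submodule.subset_span ⟨3, rfl⟩
  -- the three rows v are linearly independent
  have hli : LinearIndependent ℝ v := by
    rw [Fintype.linearIndependent_iff]
    intro g hg
    have h3 := congrFun hg 3
    have h2 := congrFun hg 2
    have h0 := congrFun hg 0
    simp [hv, hM, Fin.sum_univ_three] at h3 h2 h0
    have hg2 : g 2 = 0 := h3.resolve_right (by simp [hG0, hL0])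
    rw [hg2] at h2 h0
    have hG5L3 : G ^ 5 * L ^ 3 ≠ 0 := by positivity
    have hg1 : g 1 = 0 := by
      field_simp at h2
      have h2' : g 1 * (12 * G) = 0 := by linarith
      exact (mul_eq_zero.mp h2').resolve_right (by positivity)
    rw [hg1] at h0
    have hg0 : g 0 = 0 := by
      field_simp at h0
      have h0' : g 0 * (3 * G ^ 5) = 0 := by linarith
      exact (mul_eq_zero.mp h0').resolve_right (by positivity)
    intro i
    fin_cases i <;> assumption
  have hcard := linearIndependent_iff_card_eq_finrank_span.mp hli
  rw [Matrix.rank_eq_finrank_span_row, show M.row = M from rfl, hspan]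
  simpa [Set.finrank] using hcard.symm
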